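/- The Mordell–Tornheim double zeta value decomposes into double zeta values: for positive integers k_1, k_2 and integer k ≥ 1 with k_1 + k_2 + k such that the series converges (e.g. k ≥ 2), ∑_{m,n > 0} 1/(m^{k_1} n^{k_2} (m+n)^k) = ∑_{j=0}^{k_1-1} C(k_2-1+j, j) ζ(k+k_2+j, k_1-j) + ∑_{j=0}^{k_2-1} C(k_1-1+j, j) ζ(k+k_1+j, k_2-j). -/

import Mathlib

open Finset

/-- Double zeta value `ζ(a,b) = ∑_{m > n ≥ 1} 1/(m^a n^b)`. -/
noncomputable def doubleZeta (a b : ℕ) : ℝ :=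
  ∑' p : {p : ℕ × ℕ // 1 ≤ p.2 ∧ p.2 < p.1}, 1 / ((p.1.1 : ℝ) ^ a * (p.1.2 : ℝ) ^ b)

/-- Mordell–Tornheim double zeta value `ζ_{MT,2}(k₁,k₂;k) = ∑_{m,n ≥ 1} 1/(m^{k₁} n^{k₂} (m+n)^k)`. -/
noncomputable def mordellTornheim (k₁ k₂ k : ℕ) : ℝ :=
  ∑' p : ℕ × ℕ, 1 / (((p.1 : ℝ) + 1) ^ k₁ * ((p.2 : ℝ) + 1) ^ k₂ *
    ((p.1 : ℝ) + (p.2 : ℝ) + 2) ^ k)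

set_option maxHeartbeats 1000000

lemma MT_div_aux1 (C u u' v w w' : ℝ) (hu : u ≠ 0) (hv : v ≠ 0) (hw : w ≠ 0)
    (hu' : u' ≠ 0) (hw' : w' ≠ 0) :
    C * u * v * w / (u * u' * v * (w * w')) = C / (u' * w') := by
  field_simp

lemma MT_div_aux2 (C u u' v w w' : ℝ) (hu : u ≠ 0) (hv : v ≠ 0) (hw : w ≠ 0)
    (hu' : u' ≠ 0) (hw' : w' ≠ 0) :
    C * u * v * w / (v * (u * u') * (w * w')) = C / (u' * w') := by
  field_simp

/-- Partial sum appearing in the partial-fraction decomposition. -/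
noncomputable def MTS1 (a b : ℕ) (x y s : ℝ) : ℝ :=
  ∑ j ∈ Finset.range (a + 1), ((b + j).choose j : ℝ) * x ^ j * y ^ (b + 1) * s ^ (a - j)

lemma MT_key1 (b : ℕ) (x y : ℝ) :
    x * ∑ j ∈ Finset.range (b + 1), y ^ j * (x + y) ^ (b - j)
      = (x + y) ^ (b + 1) - y ^ (b + 1) := by
  have h := Finset.sum_range_sub' (fun j => y ^ j * (x + y) ^ (b + 1 - j)) (b + 1)
  simp only [pow_zero, Nat.sub_zero, Nat.sub_self, one_mul, mul_one] at h
  rw [Finset.mul_sum, ← h]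
  apply Finset.sum_congr rfl
  intro j hj
  have hj' : j < b + 1 := Finset.mem_range.mp hj
  have h1 : b + 1 - j = (b - j) + 1 := by omega
  have h2 : b + 1 - (j + 1) = b - j := by omega
  rw [h1, h2, pow_succ]
  ring

lemma MTS1_rec (A B : ℕ) (x y s : ℝ) :
    MTS1 (A + 1) (B + 1) x y s
      = x * MTS1 A (B + 1) x y s + y * MTS1 (A + 1) B x y s := by
  unfold MTS1
  rw [Finset.sum_range_succ' _ (A + 1), Finset.mul_sum, Finset.mul_sum,
    Finset.sum_range_succ'
      (fun j => y * (((B + j).choose j : ℝ) * x ^ j * y ^ (B + 1) * s ^ (A + 1 - j)))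
      (A + 1), ← add_assoc]
  congr 1
  · rw [← Finset.sum_add_distrib]
    apply Finset.sum_congr rfl
    intro i hi
    simp only [Nat.succ_sub_succ]
    rw [show B + 1 + (i + 1) = (B + 1 + i) + 1 by omega,
      Nat.choose_succ_succ (B + 1 + i) i,
      show B + (i + 1) = B + 1 + i by omega]
    push_cast
    ring
  · simp
    ring

lemma MT_base (b : ℕ) (x y : ℝ) :
    (x + y) ^ (b + 1) = MTS1 0 b x y (x + y) + MTS1 b 0 y x (x + y) := by
  have h0 : MTS1 0 b x y (x + y) = y ^ (b + 1) := by simp [MTS1]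
  have h1 : MTS1 b 0 y x (x + y)
      = x * ∑ j ∈ Finset.range (b + 1), y ^ j * (x + y) ^ (b - j) := by
    unfold MTS1
    rw [Finset.mul_sum]
    apply Finset.sum_congr rfl
    intro j hj
    simp [Nat.choose_self]
    ring
  rw [h0, h1, MT_key1 b x y]
  ring

lemma MT_key (x y : ℝ) : ∀ (a b : ℕ),
    (x + y) ^ (a + b + 1) = MTS1 a b x y (x + y) + MTS1 b a y x (x + y) := by
  intro a
  induction a with
  | zero =>
      intro b
      simpa using MT_base b x y
  | succ A IHa =>
      intro b
      induction b with
      | zero =>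
          have h := MT_base (A + 1) y x
          rw [add_comm y x] at h
          rw [show A + 1 + 0 + 1 = A + 1 + 1 by omega]
          linarith [h]
      | succ B IHb =>
          rw [MTS1_rec A B x y (x + y), MTS1_rec B A y x (x + y)]
          have h1 := IHa (B + 1)
          have h2 := IHb
          have hp : (x + y) ^ (A + 1 + (B + 1) + 1) = (x + y) * (x + y) ^ (A + (B + 1) + 1) := by
            rw [← pow_succ']
            congr 1
            omega
          have e2 : A + 1 + B + 1 = A + (B + 1) + 1 := by omega
          rw [e2] at h2
          rw [hp]
          linear_combination x * h1 + y * h2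

lemma MT_div_form (a b K : ℕ) (ha : 1 ≤ a) (hb : 1 ≤ b) (x y : ℝ) (hx : 0 < x) (hy : 0 < y) :
    1 / (x ^ a * y ^ b * (x + y) ^ K)
      = (∑ j ∈ Finset.range a, ((b - 1 + j).choose j : ℝ) / (x ^ (a - j) * (x + y) ^ (K + b + j)))
      + (∑ j ∈ Finset.range b, ((a - 1 + j).choose j : ℝ) / (y ^ (b - j) * (x + y) ^ (K + a + j))) := by
  obtain ⟨A, rfl⟩ : ∃ A, a = A + 1 := ⟨a - 1, by omega⟩
  obtain ⟨B, rfl⟩ : ∃ B, b = B + 1 := ⟨b - 1, by omega⟩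
  have hx0 : x ≠ 0 := ne_of_gt hx
  have hy0 : y ≠ 0 := ne_of_gt hy
  have hs : (0:ℝ) < x + y := by linarith
  have hs0 : x + y ≠ 0 := ne_of_gt hs
  have e1 : 1 / (x ^ (A+1) * y ^ (B+1) * (x + y) ^ K)
      = (x + y) ^ (A + B + 1) / (x ^ (A+1) * y ^ (B+1) * (x + y) ^ (A + B + 1 + K)) := by
    rw [pow_add]
    field_simp
    ring
  rw [e1, MT_key x y A B, add_div]
  congr 1
  · unfold MTS1
    rw [Finset.sum_div]
    apply Finset.sum_congr rfl
    intro j hj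
    have hj' : j < A + 1 := Finset.mem_range.mp hj
    rw [show B + 1 - 1 + j = B + j by omega]
    have hx1 : x ^ (A + 1) = x ^ j * x ^ (A + 1 - j) := by
      rw [← pow_add]; congr 1; omega
    have hs1 : (x + y) ^ (A + B + 1 + K) = (x + y) ^ (A - j) * (x + y) ^ (K + (B + 1) + j) := by
      rw [← pow_add]; congr 1; omega
    rw [hx1, hs1]
    exact MT_div_aux1 _ _ _ _ _ _ (by positivity) (by positivity) (by positivity)
      (by positivity) (by positivity)
  · unfold MTS1
    rw [Finset.sum_div]
    apply Finset.sum_congr rfl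
    intro j hj
    have hj' : j < B + 1 := Finset.mem_range.mp hj
    rw [show A + 1 - 1 + j = A + j by omega]
    have hy1 : y ^ (B + 1) = y ^ j * y ^ (B + 1 - j) := by
      rw [← pow_add]; congr 1; omega
    have hs1 : (x + y) ^ (A + B + 1 + K) = (x + y) ^ (B - j) * (x + y) ^ (K + (A + 1) + j) := by
      rw [← pow_add]; congr 1; omega
    rw [hy1, hs1]
    exact MT_div_aux2 _ _ _ _ _ _ (by positivity) (by positivity) (by positivity)
      (by positivity) (by positivity)

lemma MT_summable_aux (A B : ℕ) (hA : 1 ≤ A) (hB : 3 ≤ B) :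
    Summable (fun p : ℕ × ℕ => 1 / (((p.1 : ℝ) + 1) ^ A * ((p.1 : ℝ) + (p.2 : ℝ) + 2) ^ B)) := by
  have h1 : Summable (fun n : ℕ => 1 / ((n : ℝ) + 1) ^ 2) := by
    have h := Real.summable_one_div_nat_pow.mpr (by norm_num : 1 < 2)
    have h' := (summable_nat_add_iff 1).mpr h
    refine h'.congr fun n => ?_
    push_cast
    ring
  have hsum : Summable (fun p : ℕ × ℕ => (1 / ((p.1 : ℝ) + 1) ^ 2) * (1 / ((p.2 : ℝ) + 1) ^ 2)) :=
    h1.mul_of_nonneg h1 (fun n => by positivity) (fun n => by positivity)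
  apply Summable.of_nonneg_of_le (fun p => by positivity) _ hsum
  intro p
  set m := (p.1 : ℝ) with hm
  set n := (p.2 : ℝ) with hn
  have hm0 : (0:ℝ) ≤ m := Nat.cast_nonneg _
  have hn0 : (0:ℝ) ≤ n := Nat.cast_nonneg _
  rw [div_mul_div_comm, one_mul]
  apply one_div_le_one_div_of_le (by positivity)
  have h2 : (m + 1) * (n + 1) ^ 2 ≤ (m + n + 2) ^ 3 := by
    calc (m + 1) * (n + 1) ^ 2 ≤ (m + n + 2) * (m + n + 2) ^ 2 :=
          mul_le_mul (by linarith) (pow_le_pow_left₀ (by linarith) (by linarith) 2)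
            (by positivity) (by linarith)
      _ = (m + n + 2) ^ 3 := by ring
  have h3 : (m + n + 2) ^ 3 ≤ (m + n + 2) ^ B := pow_le_pow_right₀ (by linarith) hB
  have h4 : (m + 1) ≤ (m + 1) ^ A := le_self_pow₀ (by linarith) (by omega)
  calc (m + 1) ^ 2 * (n + 1) ^ 2 = (m + 1) * ((m + 1) * (n + 1) ^ 2) := by ring
    _ ≤ (m + 1) ^ A * ((m + n + 2) ^ B) :=
        mul_le_mul h4 (h2.trans h3) (by positivity) (by positivity)

/-- The reindexing equivalence `(m,n) ↦ (m+n+2, m+1)`. -/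
def MTequiv : ℕ × ℕ ≃ {p : ℕ × ℕ // 1 ≤ p.2 ∧ p.2 < p.1} where
  toFun q := ⟨(q.1 + q.2 + 2, q.1 + 1), by omega⟩
  invFun p := (p.1.2 - 1, p.1.1 - p.1.2 - 1)
  left_inv q := by
    ext <;> simp <;> omega
  right_inv p := by
    obtain ⟨⟨s, a⟩, h⟩ := p
    simp only [Subtype.mk.injEq, Prod.mk.injEq]
    omega

lemma MT_tsum_eq (A B : ℕ) :
    (∑' p : ℕ × ℕ, 1 / (((p.1 : ℝ) + 1) ^ A * ((p.1 : ℝ) + (p.2 : ℝ) + 2) ^ B))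
      = doubleZeta B A := by
  rw [doubleZeta, ← MTequiv.tsum_eq]
  apply tsum_congr
  intro q
  simp only [MTequiv, Equiv.coe_fn_mk]
  push_cast
  ring

theorem mordellTornheim_eq_sum_of_double_zetas
    (k₁ k₂ k : ℕ) (hk₁ : 1 ≤ k₁) (hk₂ : 1 ≤ k₂) (hk : 2 ≤ k) :
    mordellTornheim k₁ k₂ k
      = ∑ j ∈ Finset.range k₁, ((k₂ - 1 + j).choose j : ℝ) *
          doubleZeta (k + k₂ + j) (k₁ - j)
        + ∑ j ∈ Finset.range k₂, ((k₁ - 1 + j).choose j : ℝ) *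
          doubleZeta (k + k₁ + j) (k₂ - j) := by
  have hs₁ : ∀ j ∈ Finset.range k₁, Summable (fun p : ℕ × ℕ =>
      ((k₂ - 1 + j).choose j : ℝ) /
        (((p.1 : ℝ) + 1) ^ (k₁ - j) * ((p.1 : ℝ) + (p.2 : ℝ) + 2) ^ (k + k₂ + j))) := by
    intro j hj
    have hj' := Finset.mem_range.mp hj
    have h := (MT_summable_aux (k₁ - j) (k + k₂ + j) (by omega) (by omega)).mul_left
      ((k₂ - 1 + j).choose j : ℝ)
    exact h.congr fun p => mul_one_div _ _
  have hs₂ : ∀ j ∈ Finset.range k₂, Summable (fun p : ℕ × ℕ =>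
      ((k₁ - 1 + j).choose j : ℝ) /
        (((p.2 : ℝ) + 1) ^ (k₂ - j) * ((p.1 : ℝ) + (p.2 : ℝ) + 2) ^ (k + k₁ + j))) := by
    intro j hj
    have hj' := Finset.mem_range.mp hj
    have h := (MT_summable_aux (k₂ - j) (k + k₁ + j) (by omega) (by omega)).mul_left
      ((k₁ - 1 + j).choose j : ℝ)
    have h2 := ((Equiv.prodComm ℕ ℕ).summable_iff).mpr h
    refine h2.congr fun p => ?_
    simp only [Function.comp, Equiv.prodComm_apply, Prod.fst_swap, Prod.snd_swap]
    rw [mul_one_div, show (p.2 : ℝ) + (p.1 : ℝ) + 2 = (p.1 : ℝ) + (p.2 : ℝ) + 2 by ring]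
  have hpt : ∀ p : ℕ × ℕ,
      1 / (((p.1 : ℝ) + 1) ^ k₁ * ((p.2 : ℝ) + 1) ^ k₂ * ((p.1 : ℝ) + (p.2 : ℝ) + 2) ^ k)
        = (∑ j ∈ Finset.range k₁, ((k₂ - 1 + j).choose j : ℝ) /
            (((p.1 : ℝ) + 1) ^ (k₁ - j) * ((p.1 : ℝ) + (p.2 : ℝ) + 2) ^ (k + k₂ + j)))
          + (∑ j ∈ Finset.range k₂, ((k₁ - 1 + j).choose j : ℝ) /
            (((p.2 : ℝ) + 1) ^ (k₂ - j) * ((p.1 : ℝ) + (p.2 : ℝ) + 2) ^ (k + k₁ + j))) := by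
    intro p
    have h := MT_div_form k₁ k₂ k hk₁ hk₂ ((p.1 : ℝ) + 1) ((p.2 : ℝ) + 1)
      (by positivity) (by positivity)
    rw [show ((p.1 : ℝ) + 1) + ((p.2 : ℝ) + 1) = (p.1 : ℝ) + (p.2 : ℝ) + 2 by ring] at h
    exact h
  unfold mordellTornheim
  rw [tsum_congr hpt, Summable.tsum_add (summable_sum hs₁) (summable_sum hs₂),
    Summable.tsum_finsetSum hs₁, Summable.tsum_finsetSum hs₂]
  congr 1
  · apply Finset.sum_congr rfl
    intro j hj
    have e : ∀ p : ℕ × ℕ, ((k₂ - 1 + j).choose j : ℝ) /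
        (((p.1 : ℝ) + 1) ^ (k₁ - j) * ((p.1 : ℝ) + (p.2 : ℝ) + 2) ^ (k + k₂ + j))
        = ((k₂ - 1 + j).choose j : ℝ) *
          (1 / (((p.1 : ℝ) + 1) ^ (k₁ - j) * ((p.1 : ℝ) + (p.2 : ℝ) + 2) ^ (k + k₂ + j))) :=
      fun p => (mul_one_div _ _).symm
    rw [tsum_congr e, tsum_mul_left, MT_tsum_eq]
  · apply Finset.sum_congr rfl
    intro j hj
    have e := (Equiv.prodComm ℕ ℕ).tsum_eq (fun p : ℕ × ℕ => ((k₁ - 1 + j).choose j : ℝ) *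
      (1 / (((p.1 : ℝ) + 1) ^ (k₂ - j) * ((p.1 : ℝ) + (p.2 : ℝ) + 2) ^ (k + k₁ + j))))
    have h1 : (∑' p : ℕ × ℕ, ((k₁ - 1 + j).choose j : ℝ) /
        (((p.2 : ℝ) + 1) ^ (k₂ - j) * ((p.1 : ℝ) + (p.2 : ℝ) + 2) ^ (k + k₁ + j)))
        = ∑' p : ℕ × ℕ, ((k₁ - 1 + j).choose j : ℝ) *
          (1 / (((p.1 : ℝ) + 1) ^ (k₂ - j) * ((p.1 : ℝ) + (p.2 : ℝ) + 2) ^ (k + k₁ + j))) := by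
      rw [← e]
      apply tsum_congr
      intro q
      simp only [Equiv.prodComm_apply, Prod.fst_swap, Prod.snd_swap]
      rw [mul_one_div, show (q.2 : ℝ) + (q.1 : ℝ) + 2 = (q.1 : ℝ) + (q.2 : ℝ) + 2 by ring]
    rw [h1, tsum_mul_left, MT_tsum_eq]
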